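/- arXiv:2111.03684 — 4 statements merged into one kernel-verified Lean document; each statement's English description precedes it below -/
import Mathlib

section
/- Let k be a field, R a finite-dimensional semisimple k-algebra, V a simple finite-dimensional (left) R-module, and n₁ ≤ n₂ ≤ n₃ positive integers. Let U = { v ∈ V^{⊕n₃} : R·v ≅ V^{⊕n₁} } and C(n₂,n₃) = { C ⊆ V^{⊕n₃} : C is an R-submodule isomorphic to V^{⊕n₂} }. Then for each u ∈ U there is a bijection between { C ∈ C(n₂,n₃) : u ∈ C } and C(n₂−n₁, n₃−n₁). -/
open Module LinearMap

section Helpers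

variable {k : Type*} [Field k] {R : Type*} [Ring R] [Algebra k R]
    {V : Type*} [AddCommGroup V] [Module R V] [Module k V] [IsScalarTower k R V]

/-- `V × (Fin m → V) ≃ₗ[R] Fin (m+1) → V` -/
noncomputable def consLEquiv (m : ℕ) : (V × (Fin m → V)) ≃ₗ[R] (Fin (m + 1) → V) :=
  (((LinearEquiv.funUnique (Fin 1) R V).symm.prodCongr (LinearEquiv.refl R (Fin m → V))).trans
    (LinearEquiv.sumArrowLequivProdArrow (Fin 1) (Fin m) R V).symm).trans
    (LinearEquiv.funCongrLeft R V (((finCongr (Nat.add_comm 1 m)).symm).trans finSumFinEquiv.symm))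

variable [IsSimpleModule R V]

/-- Every simple submodule of `Fin n → V` is isomorphic to `V`. -/
theorem simple_sub_iso (n : ℕ) (S : Submodule R (Fin n → V)) (hS : IsSimpleModule R S) :
    Nonempty (S ≃ₗ[R] V) := by
  haveI := hS
  haveI : Nontrivial S := IsSimpleModule.nontrivial R S
  obtain ⟨x, hx⟩ := exists_ne (0 : S)
  have hx' : (x : Fin n → V) ≠ 0 := by simpa [Submodule.coe_eq_zero] using hx
  obtain ⟨i, hi⟩ := Function.ne_iff.mp hx'
  have hφ : (LinearMap.proj i ∘ₗ S.subtype : S →ₗ[R] V) ≠ 0 := by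
    intro h
    exact hi (by simpa using LinearMap.congr_fun h x)
  exact ⟨LinearEquiv.ofBijective _ (LinearMap.bijective_of_ne_zero hφ)⟩

end Helpers

section Helpers2

variable {k : Type*} [Field k] {R : Type*} [Ring R] [Algebra k R]
    {V : Type*} [AddCommGroup V] [Module R V] [Module k V] [IsScalarTower k R V]

/-- finrank over `k` is invariant under `R`-linear equivalences. -/
theorem finrank_eq_of_requiv {M N : Type*} [AddCommGroup M] [Module R M] [Module k M]
    [IsScalarTower k R M] [AddCommGroup N] [Module R N] [Module k N] [IsScalarTower k R N]
    (e : M ≃ₗ[R] N) : Module.finrank k M = Module.finrank k N :=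
  (e.restrictScalars k).finrank_eq

variable [IsSimpleModule R V] [FiniteDimensional k V]

theorem iso_pi_of_semisimple : ∀ (d : ℕ) (M : Type*) [AddCommGroup M] [Module R M] [Module k M]
    [IsScalarTower k R M] [IsSemisimpleModule R M] [FiniteDimensional k M],
    Module.finrank k M = d →
    (∀ S : Submodule R M, IsSimpleModule R S → Nonempty (S ≃ₗ[R] V)) →
    ∃ m, Nonempty (M ≃ₗ[R] (Fin m → V)) := by
  intro d
  induction d using Nat.strong_induction_on with
  | _ d ih =>
  intro M _ _ _ _ _ _ hd hM
  rcases subsingleton_or_nontrivial M with h | h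
  · refine ⟨0, ⟨?_⟩⟩
    exact { toFun := 0, invFun := 0, map_add' := by simp, map_smul' := by simp,
            left_inv := fun x => Subsingleton.elim _ _,
            right_inv := fun x => Subsingleton.elim _ _ }
  · obtain ⟨S, hS⟩ := IsSemisimpleModule.exists_simple_submodule (R := R) (M := M)
    obtain ⟨D, hDc⟩ := exists_isCompl S
    haveI := hS
    obtain ⟨eS⟩ := hM S hS
    haveI : FiniteDimensional k S := inferInstanceAs (FiniteDimensional k (S.restrictScalars k))
    haveI : FiniteDimensional k D := inferInstanceAs (FiniteDimensional k (D.restrictScalars k))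
    have heq : (S × D) ≃ₗ[R] M := Submodule.prodEquivOfIsCompl S D hDc
    have hrk : Module.finrank k S + Module.finrank k D = d := by
      rw [← hd, ← finrank_eq_of_requiv heq, Module.finrank_prod]
    have hVpos : 0 < Module.finrank k V := by
      haveI : Nontrivial V := IsSimpleModule.nontrivial R V
      exact Module.finrank_pos
    have hSpos : 0 < Module.finrank k S := by
      rw [finrank_eq_of_requiv eS]; exact hVpos
    have hlt : Module.finrank k D < d := by omega
    obtain ⟨m, ⟨eD⟩⟩ := ih _ hlt D rfl (fun S' hS' => by
      haveI := hS'
      have e' : S' ≃ₗ[R] Submodule.map D.subtype S' :=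
        Submodule.equivMapOfInjective _ (Submodule.injective_subtype D) S'
      exact ⟨e'.trans (hM _ (IsSimpleModule.congr (N := S') e'.symm)).some⟩)
    exact ⟨m + 1, ⟨heq.symm.trans (((eS.prodCongr eD).trans (consLEquiv m)))⟩⟩

end Helpers2

section Helpers3

variable {k : Type*} [Field k] {R : Type*} [Ring R] [Algebra k R]
    {V : Type*} [AddCommGroup V] [Module R V] [Module k V] [IsScalarTower k R V]
    [IsSimpleModule R V] [FiniteDimensional k V]

theorem finrank_pi_fin (m : ℕ) :
    Module.finrank k (Fin m → V) = m * Module.finrank k V := by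
  rw [Module.finrank_pi_fintype]
  simp [Finset.sum_const, mul_comm]

theorem finrank_restr {M : Type*} [AddCommGroup M] [Module R M] [Module k M]
    [IsScalarTower k R M] (p : Submodule R M) :
    Module.finrank k (p.restrictScalars k) = Module.finrank k p := rfl

set_option synthInstance.maxHeartbeats 1000000 in
theorem sub_iso_pi [IsSemisimpleRing R] [FiniteDimensional k R] (n : ℕ)
    (C : Submodule R (Fin n → V)) :
    ∃ m, Nonempty (C ≃ₗ[R] (Fin m → V)) ∧
      Module.finrank k C = m * Module.finrank k V := by
  haveI : FiniteDimensional k C := inferInstanceAs (FiniteDimensional k (C.restrictScalars k))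
  obtain ⟨m, ⟨e⟩⟩ := iso_pi_of_semisimple (Module.finrank k C) C rfl (fun S hS => by
    haveI := hS
    have e' : S ≃ₗ[R] Submodule.map C.subtype S :=
      Submodule.equivMapOfInjective _ (Submodule.injective_subtype C) S
    have hmap : IsSimpleModule R (Submodule.map C.subtype S) := IsSimpleModule.congr (N := S) e'.symm
    exact ⟨e'.trans (simple_sub_iso n (Submodule.map C.subtype S) hmap).some⟩)
  exact ⟨m, ⟨e⟩, by rw [finrank_eq_of_requiv e, finrank_pi_fin]⟩

end Helpers3

set_option synthInstance.maxHeartbeats 1000000 in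
set_option maxHeartbeats 1000000 in
/-- Let `k` be a field, `R` a finite-dimensional semisimple `k`-algebra, `V` a simple
finite-dimensional left `R`-module, and `n₁ ≤ n₂ ≤ n₃`. Let
`U = {v ∈ V^{n₃} : R·v ≅ V^{n₁}}` and `C(a,b)` the set of `R`-submodules of `V^{b}`
isomorphic to `V^{a}`. Then for each `u ∈ U` there is a bijection between
`{C ∈ C(n₂,n₃) : u ∈ C}` and `C(n₂−n₁, n₃−n₁)`. -/
theorem stmt2 (k : Type*) [Field k] (R : Type*) [Ring R] [Algebra k R]
    [FiniteDimensional k R] [IsSemisimpleRing R]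
    (V : Type*) [AddCommGroup V] [Module R V] [Module k V] [IsScalarTower k R V]
    [IsSimpleModule R V] [FiniteDimensional k V]
    (n₁ n₂ n₃ : ℕ) (h12 : n₁ ≤ n₂) (h23 : n₂ ≤ n₃)
    (u : Fin n₃ → V)
    (hu : Nonempty ((Submodule.span R {u}) ≃ₗ[R] (Fin n₁ → V))) :
    Nonempty
      ({C : Submodule R (Fin n₃ → V) // Nonempty (C ≃ₗ[R] (Fin n₂ → V)) ∧ u ∈ C} ≃
       {C : Submodule R (Fin (n₃ - n₁) → V) // Nonempty (C ≃ₗ[R] (Fin (n₂ - n₁) → V))}) := by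
  classical
  set d := Module.finrank k V with hd
  haveI : Nontrivial V := IsSimpleModule.nontrivial R V
  have hdpos : 0 < d := Module.finrank_pos
  set W : Submodule R (Fin n₃ → V) := Submodule.span R {u} with hW
  have hWrk : Module.finrank k W = n₁ * d := by
    rw [finrank_eq_of_requiv hu.some, finrank_pi_fin]
  obtain ⟨W', hW'c⟩ := exists_isCompl W
  obtain ⟨m₀, ⟨e₀⟩, hm₀⟩ := sub_iso_pi (k := k) n₃ W'
  have htot : Module.finrank k (Fin n₃ → V) = n₃ * d := finrank_pi_fin n₃
  haveI : FiniteDimensional k W := inferInstanceAs (FiniteDimensional k (W.restrictScalars k))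
  haveI : FiniteDimensional k W' := inferInstanceAs (FiniteDimensional k (W'.restrictScalars k))
  have hsum : n₁ * d + m₀ * d = n₃ * d := by
    rw [← hWrk, ← hm₀, ← htot,
      ← finrank_eq_of_requiv (Submodule.prodEquivOfIsCompl W W' hW'c), Module.finrank_prod]
  have hm₀' : m₀ = n₃ - n₁ := by
    have h1 : (n₁ + m₀) * d = n₃ * d := by rw [add_mul]; exact hsum
    have h2 := Nat.eq_of_mul_eq_mul_right hdpos h1
    omega
  subst hm₀'
  let q : ((Fin n₃ → V) ⧸ W) ≃ₗ[R] (Fin (n₃ - n₁) → V) :=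
    (Submodule.quotientEquivOfIsCompl W W' hW'c).trans e₀
  set f : (Fin n₃ → V) →ₗ[R] (Fin (n₃ - n₁) → V) := q.toLinearMap ∘ₗ W.mkQ with hf
  have hker : LinearMap.ker f = W := by
    rw [hf, LinearMap.ker_comp, LinearEquiv.ker, Submodule.comap_bot, Submodule.ker_mkQ]
  have hsurj : Function.Surjective f := q.surjective.comp (Submodule.mkQ_surjective W)
  have key : ∀ C : Submodule R (Fin n₃ → V), W ≤ C →
      Module.finrank k (Submodule.map f C) + n₁ * d = Module.finrank k C := by
    intro C hWC
    haveI : FiniteDimensional k C := inferInstanceAs (FiniteDimensional k (C.restrictScalars k))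
    set g : C →ₗ[R] (Fin (n₃ - n₁) → V) := f ∘ₗ C.subtype with hg
    have hrange : LinearMap.range g = Submodule.map f C := by
      rw [hg, LinearMap.range_comp, Submodule.range_subtype]
    have hkg : LinearMap.ker g = Submodule.comap C.subtype W := by
      rw [hg, LinearMap.ker_comp, hker]
    have hrn := LinearMap.finrank_range_add_finrank_ker (g.restrictScalars k)
    have hrr : LinearMap.range (g.restrictScalars k) = (LinearMap.range g).restrictScalars k := rfl
    rw [LinearMap.ker_restrictScalars, hkg, hrr, hrange, finrank_restr, finrank_restr] at hrn
    have hck : Module.finrank k (Submodule.comap C.subtype W) = n₁ * d := by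
      rw [finrank_eq_of_requiv (M := Submodule.comap C.subtype W) (N := W) (Submodule.comapSubtypeEquivOfLe hWC), hWrk]
    rw [hck] at hrn
    exact hrn
  have fwd : ∀ (C : Submodule R (Fin n₃ → V)), Nonempty (C ≃ₗ[R] (Fin n₂ → V)) → u ∈ C →
      Nonempty (Submodule.map f C ≃ₗ[R] (Fin (n₂ - n₁) → V)) := by
    intro C hC huC
    obtain ⟨eC⟩ := hC
    have hWC : W ≤ C := by rw [hW]; exact (Submodule.span_singleton_le_iff_mem u C).mpr huC
    have h1 : Module.finrank k C = n₂ * d := by rw [finrank_eq_of_requiv eC, finrank_pi_fin]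
    obtain ⟨m, ⟨e⟩, hm⟩ := sub_iso_pi (k := k) (n₃ - n₁) (Submodule.map f C)
    have h2 := key C hWC
    rw [h1, hm] at h2
    have h3 : (m + n₁) * d = n₂ * d := by rw [add_mul]; exact h2
    have h4 := Nat.eq_of_mul_eq_mul_right hdpos h3
    have h5 : m = n₂ - n₁ := by omega
    exact h5 ▸ ⟨e⟩
  have bwd : ∀ (D : Submodule R (Fin (n₃ - n₁) → V)),
      Nonempty (D ≃ₗ[R] (Fin (n₂ - n₁) → V)) →
      Nonempty (Submodule.comap f D ≃ₗ[R] (Fin n₂ → V)) ∧ u ∈ Submodule.comap f D := by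
    intro D hD
    obtain ⟨eD⟩ := hD
    have hWC : W ≤ Submodule.comap f D := by
      have h := Submodule.comap_mono (f := f) (bot_le (a := D))
      rwa [← hker]
    have huC : u ∈ Submodule.comap f D := hWC (Submodule.mem_span_singleton_self u)
    have hmap : Submodule.map f (Submodule.comap f D) = D :=
      Submodule.map_comap_eq_of_surjective hsurj D
    have h2 := key _ hWC
    rw [hmap] at h2
    have hDrk : Module.finrank k D = (n₂ - n₁) * d := by
      rw [finrank_eq_of_requiv eD, finrank_pi_fin]
    obtain ⟨m, ⟨e⟩, hm⟩ := sub_iso_pi (k := k) n₃ (Submodule.comap f D)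
    rw [hDrk, hm] at h2
    have h3 : ((n₂ - n₁) + n₁) * d = m * d := by rw [add_mul]; exact h2
    have h4 := Nat.eq_of_mul_eq_mul_right hdpos h3
    have h5 : m = n₂ := by omega
    exact ⟨h5 ▸ ⟨e⟩, huC⟩
  refine ⟨{
    toFun := fun C => ⟨Submodule.map f C.1, fwd C.1 C.2.1 C.2.2⟩
    invFun := fun D => ⟨Submodule.comap f D.1, (bwd D.1 D.2).1, (bwd D.1 D.2).2⟩
    left_inv := fun C => Subtype.ext (by
      have hWC : W ≤ C.1 := by
        rw [hW]; exact (Submodule.span_singleton_le_iff_mem u _).mpr C.2.2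
      show Submodule.comap f (Submodule.map f C.1) = C.1
      rw [Submodule.comap_map_eq, hker, sup_eq_left.mpr hWC])
    right_inv := fun D => Subtype.ext (by
      show Submodule.map f (Submodule.comap f D.1) = D.1
      exact Submodule.map_comap_eq_of_surjective hsurj D.1) }⟩
end

section
/- Let k be a finite field, R a finite-dimensional semisimple k-algebra, V a simple finite-dimensional left R-module, and n₁ ≤ n₂ ≤ n₃. With U and C(n₂,n₃) as above, the cardinality of { C ∈ C(n₂,n₃) : u ∈ C } is independent of the choice of u ∈ U. -/
set_option synthInstance.maxHeartbeats 1000000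
set_option maxHeartbeats 1000000
set_option linter.unusedSectionVars false

open Module Submodule

namespace Stmt3Aux

variable {k R V : Type*} [Field k] [Ring R] [Algebra k R]
  [AddCommGroup V] [Module R V] [Module k V] [IsScalarTower k R V]

section fd
variable {M : Type*} [AddCommGroup M] [Module R M] [Module k M] [IsScalarTower k R M]

/-- `k`-linear equiv between an `R`-submodule (with its `k`-module structure) and its
restriction of scalars. -/
noncomputable def resEquiv (p : Submodule R M) : ↥(p.restrictScalars k) ≃ₗ[k] ↥p :=
  (Submodule.restrictScalarsEquiv k R M p).restrictScalars k

lemma fd_submodule [FiniteDimensional k M] (p : Submodule R M) : FiniteDimensional k p :=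
  (resEquiv (k := k) p).finiteDimensional

/-- Rank-nullity for the quotient map restricted to a submodule containing `M`. -/
lemma finrank_eq_add_map_mkQ [FiniteDimensional k M] {N C : Submodule R M} (h : N ≤ C) :
    finrank k C = finrank k N + finrank k (C.map N.mkQ) := by
  haveI : FiniteDimensional k C := fd_submodule (k := k) C
  let g : ↥C →ₗ[R] (M ⧸ N) := N.mkQ.comp C.subtype
  have hker : LinearMap.ker g = comap C.subtype N := by
    rw [LinearMap.ker_comp, Submodule.ker_mkQ]
  have hrange : LinearMap.range g = C.map N.mkQ := by
    rw [LinearMap.range_comp, Submodule.range_subtype]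
  have h1 := LinearMap.finrank_range_add_finrank_ker (g.restrictScalars k)
  have h2 : finrank k (LinearMap.range (g.restrictScalars k))
      = finrank k (C.map N.mkQ) := by
    have : LinearMap.range (g.restrictScalars k) = (LinearMap.range g).restrictScalars k := rfl
    rw [this, hrange]
    exact LinearEquiv.finrank_eq (resEquiv (k := k) (C.map N.mkQ))
  have h3 : finrank k (LinearMap.ker (g.restrictScalars k)) = finrank k N := by
    have : LinearMap.ker (g.restrictScalars k) = (LinearMap.ker g).restrictScalars k := rfl
    rw [this, hker]
    exact LinearEquiv.finrank_eq
      ((resEquiv (k := k) (comap C.subtype N)).trans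
        ((Submodule.comapSubtypeEquivOfLe h).restrictScalars k))
  omega

end fd

variable [IsSimpleModule R V]

/-- Every simple submodule of `Fin n → V` is isomorphic to `V`. -/
lemma simple_iso {n : ℕ} (S : Submodule R (Fin n → V)) (hS : IsSimpleModule R S) :
    Nonempty (S ≃ₗ[R] V) := by
  haveI := hS
  haveI : Nontrivial S := IsSimpleModule.nontrivial R S
  obtain ⟨s, hs⟩ := exists_ne (0 : S)
  have hs' : (s : Fin n → V) ≠ 0 := fun h => hs (Subtype.ext h)
  obtain ⟨i, hi⟩ := Function.ne_iff.mp hs'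
  let f : S →ₗ[R] V := (LinearMap.proj i).comp S.subtype
  have hf : f ≠ 0 := fun h => hi (by simpa [f] using congrFun (congrArg (·.toFun) h) s)
  exact ⟨LinearEquiv.ofBijective f (LinearMap.bijective_of_ne_zero hf)⟩

variable [FiniteDimensional k V] [IsSemisimpleRing R]

/-- `V × (Fin m → V)` is isomorphic to `Fin (m+1) → V`. -/
noncomputable def vcons (m : ℕ) : (V × (Fin m → V)) ≃ₗ[R] (Fin (m+1) → V) :=
  (((LinearEquiv.funUnique (Fin 1) R V).symm.prodCongr (LinearEquiv.refl R (Fin m → V))).trans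
    (LinearEquiv.sumArrowLequivProdArrow (Fin 1) (Fin m) R V).symm).trans
    (LinearEquiv.piCongrLeft' R (fun _ : Fin 1 ⊕ Fin m => V)
      (finSumFinEquiv.trans (finCongr (Nat.add_comm 1 m))))

lemma exists_iso_pi_aux (r : ℕ) : ∀ {n : ℕ} (W : Submodule R (Fin n → V)),
    finrank k W ≤ r → ∃ m : ℕ, Nonempty (W ≃ₗ[R] (Fin m → V)) := by
  induction r with
  | zero =>
    intro n W hr
    haveI : FiniteDimensional k W := fd_submodule (k := k) W
    haveI : Subsingleton W := finrank_zero_iff.mp (Nat.le_zero.mp hr)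
    exact ⟨0, ⟨LinearEquiv.ofSubsingleton _ _⟩⟩
  | succ r IH =>
    intro n W hr
    haveI : FiniteDimensional k W := fd_submodule (k := k) W
    rcases subsingleton_or_nontrivial W with hW | hW
    · exact ⟨0, ⟨LinearEquiv.ofSubsingleton _ _⟩⟩
    obtain ⟨S, hS⟩ := IsSemisimpleModule.exists_simple_submodule R W
    haveI := hS
    obtain ⟨T, hT⟩ := exists_isCompl S
    let eW : (S × T) ≃ₗ[R] W := Submodule.prodEquivOfIsCompl S T hT
    haveI : FiniteDimensional k S := fd_submodule (k := k) S
    haveI : FiniteDimensional k T := fd_submodule (k := k) T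
    -- S is isomorphic to V
    have e1 : S ≃ₗ[R] (S.map W.subtype) := W.equivSubtypeMap S
    haveI : IsSimpleModule R (S.map W.subtype) := IsSimpleModule.congr (N := ↥S) e1.symm
    obtain ⟨e2⟩ := simple_iso (S.map W.subtype) inferInstance
    let eS : S ≃ₗ[R] V := e1.trans e2
    -- dimension count
    have hfin : finrank k S + finrank k T = finrank k W := by
      haveI : Module.Free k ↥S := Module.Free.of_divisionRing k ↥S
      haveI : Module.Free k ↥T := Module.Free.of_divisionRing k ↥T
      have h1 := LinearEquiv.finrank_eq (R := k) (M := (↥S × ↥T)) (N := ↥W)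
        (eW.restrictScalars k)
      rw [Module.finrank_prod] at h1
      exact h1
    haveI : Nontrivial S := IsSimpleModule.nontrivial R S
    have hSpos : 0 < finrank k S := Module.finrank_pos (R := k) (M := ↥S)
    -- T by induction
    have e3 : T ≃ₗ[R] (T.map W.subtype) := W.equivSubtypeMap T
    have hTfin : finrank k (T.map W.subtype) ≤ r := by
      have h2 := LinearEquiv.finrank_eq (R := k) (M := ↥T) (N := ↥(T.map W.subtype))
        (e3.restrictScalars k)
      omega
    obtain ⟨m, ⟨eT⟩⟩ := IH (T.map W.subtype) hTfin
    exact ⟨m + 1, ⟨eW.symm.trans (((eS.prodCongr (e3.trans eT))).trans (vcons m))⟩⟩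

lemma pi_finrank (m : ℕ) : finrank k (Fin m → V) = m * finrank k V := by
  rw [Module.finrank_pi_fintype, Finset.sum_const, Finset.card_univ, Fintype.card_fin,
    smul_eq_mul]

lemma iso_iff_finrank {n m : ℕ} (W : Submodule R (Fin n → V)) :
    Nonempty (W ≃ₗ[R] (Fin m → V)) ↔ finrank k W = m * finrank k V := by
  constructor
  · rintro ⟨e⟩
    rw [LinearEquiv.finrank_eq (R := k) (M := ↥W) (N := Fin m → V) (e.restrictScalars k),
      pi_finrank]
  · intro h
    obtain ⟨m', ⟨e⟩⟩ := exists_iso_pi_aux (k := k) (finrank k W) W le_rfl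
    have h' : finrank k W = m' * finrank k V := by
      rw [LinearEquiv.finrank_eq (R := k) (M := ↥W) (N := Fin m' → V) (e.restrictScalars k),
        pi_finrank]
    haveI : Nontrivial V := IsSimpleModule.nontrivial R V
    have hd : 0 < finrank k V := Module.finrank_pos
    have hm : m' = m := Nat.eq_of_mul_eq_mul_right hd (by omega)
    exact ⟨hm ▸ e⟩

lemma count_eq (n₁ n₂ n₃ : ℕ) (h12 : n₁ ≤ n₂) (h23 : n₂ ≤ n₃) (u : Fin n₃ → V)
    (hu : Nonempty ((Submodule.span R {u}) ≃ₗ[R] (Fin n₁ → V))) :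
    Nat.card {C : Submodule R (Fin n₃ → V) // Nonempty (C ≃ₗ[R] (Fin n₂ → V)) ∧ u ∈ C}
      = Nat.card {D : Submodule R (Fin (n₃ - n₁) → V) //
          finrank k D = (n₂ - n₁) * finrank k V} := by
  have hdpos : 0 < finrank k V := by
    haveI : Nontrivial V := IsSimpleModule.nontrivial R V
    exact Module.finrank_pos
  set M : Submodule R (Fin n₃ → V) := Submodule.span R {u} with hMdef
  have hM : finrank k M = n₁ * finrank k V := (iso_iff_finrank M).mp hu
  have harith : n₁ * finrank k V + (n₂ - n₁) * finrank k V = n₂ * finrank k V := by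
    rw [← Nat.add_mul, Nat.add_sub_cancel' h12]
  have harith3 : n₁ * finrank k V + (n₃ - n₁) * finrank k V = n₃ * finrank k V := by
    rw [← Nat.add_mul, Nat.add_sub_cancel' (h12.trans h23)]
  -- step 1
  have E1 : {C : Submodule R (Fin n₃ → V) // Nonempty (C ≃ₗ[R] (Fin n₂ → V)) ∧ u ∈ C}
      ≃ {C : Submodule R (Fin n₃ → V) // finrank k C = n₂ * finrank k V ∧ M ≤ C} :=
    Equiv.subtypeEquivRight fun C =>
      and_congr (iso_iff_finrank C) (Submodule.span_singleton_le_iff_mem u C).symm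
  -- step 2
  have E2 : {C : Submodule R (Fin n₃ → V) // finrank k C = n₂ * finrank k V ∧ M ≤ C}
      ≃ {D : Submodule R ((Fin n₃ → V) ⧸ M) // finrank k D = (n₂ - n₁) * finrank k V} := by
    refine
      { toFun := fun C => ⟨C.1.map M.mkQ, ?_⟩
        invFun := fun D => ⟨comap M.mkQ D.1, ?_, ?_⟩
        left_inv := fun C => Subtype.ext ?_
        right_inv := fun D => Subtype.ext ?_ }
    · have h1 := finrank_eq_add_map_mkQ (k := k) C.2.2
      have h2 := C.2.1
      omega
    · have hle : M ≤ comap M.mkQ D.1 := fun x hx => by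
        have hx0 : M.mkQ x = 0 := (Submodule.Quotient.mk_eq_zero M).mpr hx
        simp [Submodule.mem_comap, hx0]
      have hmc : (comap M.mkQ D.1).map M.mkQ = D.1 :=
        Submodule.map_comap_eq_of_surjective (Submodule.mkQ_surjective M) D.1
      have := finrank_eq_add_map_mkQ (k := k) hle
      rw [hmc] at this
      have hD := D.2
      omega
    · exact fun x hx => by
        have hx0 : M.mkQ x = 0 := (Submodule.Quotient.mk_eq_zero M).mpr hx
        simp [Submodule.mem_comap, hx0]
    · simp only [Submodule.comap_map_mkQ]
      exact sup_eq_right.mpr C.2.2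
    · exact Submodule.map_comap_eq_of_surjective (Submodule.mkQ_surjective M) D.1
  -- step 3
  obtain ⟨W, hW⟩ := exists_isCompl M
  have e0 : ((Fin n₃ → V) ⧸ M) ≃ₗ[R] W := Submodule.quotientEquivOfIsCompl M W hW
  have hWrank : finrank k W = (n₃ - n₁) * finrank k V := by
    have h1 := LinearEquiv.finrank_eq (R := k) (M := (↥M × ↥W)) (N := Fin n₃ → V)
      ((Submodule.prodEquivOfIsCompl M W hW).restrictScalars k)
    haveI : FiniteDimensional k M := fd_submodule (k := k) M
    haveI : FiniteDimensional k W := fd_submodule (k := k) W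
    rw [Module.finrank_prod, pi_finrank] at h1
    omega
  obtain ⟨eW⟩ := (iso_iff_finrank W).mpr hWrank
  have e : ((Fin n₃ → V) ⧸ M) ≃ₗ[R] (Fin (n₃ - n₁) → V) := e0.trans eW
  have E3 : {D : Submodule R ((Fin n₃ → V) ⧸ M) // finrank k D = (n₂ - n₁) * finrank k V}
      ≃ {D : Submodule R (Fin (n₃ - n₁) → V) // finrank k D = (n₂ - n₁) * finrank k V} := by
    refine Equiv.subtypeEquiv (Submodule.orderIsoMapComap e).toEquiv fun D => ?_
    have : finrank k (D.map (e : ((Fin n₃ → V) ⧸ M) →ₗ[R] (Fin (n₃ - n₁) → V))) = finrank k D :=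
      (LinearEquiv.finrank_eq
        ((Submodule.equivMapOfInjective _ e.injective D).restrictScalars k)).symm
    show _ ↔ finrank k ((Submodule.orderIsoMapComap e) D) = _
    rw [show ((Submodule.orderIsoMapComap e) D : Submodule R (Fin (n₃ - n₁) → V))
        = D.map (e : ((Fin n₃ → V) ⧸ M) →ₗ[R] (Fin (n₃ - n₁) → V)) from rfl, this]
  exact Nat.card_congr (E1.trans (E2.trans E3))

end Stmt3Aux

/-- **U-balancedness.** Let `k` be a finite field, `R` a finite-dimensional semisimple
`k`-algebra, `V` a simple finite-dimensional left `R`-module, and `n₁ ≤ n₂ ≤ n₃`. With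
`U = {v ∈ V^{n₃} : R·v ≅ V^{n₁}}` and `C(n₂,n₃)` the set of `R`-submodules of `V^{n₃}`
isomorphic to `V^{n₂}`, the cardinality of `{C ∈ C(n₂,n₃) : u ∈ C}` is independent of the
choice of `u ∈ U`. -/
theorem stmt3 (k : Type*) [Field k] [Finite k] (R : Type*) [Ring R] [Algebra k R]
    [FiniteDimensional k R] [IsSemisimpleRing R]
    (V : Type*) [AddCommGroup V] [Module R V] [Module k V] [IsScalarTower k R V]
    [IsSimpleModule R V] [FiniteDimensional k V]
    (n₁ n₂ n₃ : ℕ) (h12 : n₁ ≤ n₂) (h23 : n₂ ≤ n₃)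
    (u u' : Fin n₃ → V)
    (hu : Nonempty ((Submodule.span R {u}) ≃ₗ[R] (Fin n₁ → V)))
    (hu' : Nonempty ((Submodule.span R {u'}) ≃ₗ[R] (Fin n₁ → V))) :
    Nat.card {C : Submodule R (Fin n₃ → V) // Nonempty (C ≃ₗ[R] (Fin n₂ → V)) ∧ u ∈ C} =
    Nat.card {C : Submodule R (Fin n₃ → V) // Nonempty (C ≃ₗ[R] (Fin n₂ → V)) ∧ u' ∈ C} := by
  rw [Stmt3Aux.count_eq (k := k) n₁ n₂ n₃ h12 h23 u hu,
    Stmt3Aux.count_eq (k := k) n₁ n₂ n₃ h12 h23 u' hu']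
end

section
/- Let A be a central simple division algebra over a number field K with maximal O_K-order O viewed as a lattice in A_R = A ⊗_Q R via a quadratic form q_a(x) = Tr(x*ax) for a symmetric positive definite a. Then the shortest vector length satisfies λ₁(O) ≥ √([A:Q]) · N(a)^{1/(2[A:Q])}. -/
open scoped NumberField TensorProduct RealInnerProductSpace


lemma aux_trace_det {E : Type*} [NormedAddCommGroup E] [InnerProductSpace ℝ E]
    [FiniteDimensional ℝ E] (T : E →ₗ[ℝ] E) (hsym : T.IsSymmetric)
    (hp : ∀ z : E, z ≠ 0 → 0 < ⟪z, T z⟫) :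
    0 < LinearMap.det T ∧
      (Module.finrank ℝ E : ℝ) * (LinearMap.det T) ^ ((Module.finrank ℝ E : ℝ))⁻¹ ≤
        LinearMap.trace ℝ E T := by
  set n := Module.finrank ℝ E with hn
  have hn' : Module.finrank ℝ E = n := rfl
  let b := hsym.eigenvectorBasis hn'
  let μ : Fin n → ℝ := hsym.eigenvalues hn'
  have happ : ∀ i, T (b i) = μ i • b i := fun i => hsym.apply_eigenvectorBasis hn' i
  have hμpos : ∀ i, 0 < μ i := by
    intro i
    have h0 : b i ≠ 0 := b.toBasis.ne_zero i
    have h1 := hp (b i) h0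
    rwa [happ i, real_inner_smul_right, real_inner_self_eq_norm_sq, b.orthonormal.1 i,
      one_pow, mul_one] at h1
  have hmat : LinearMap.toMatrix b.toBasis b.toBasis T = Matrix.diagonal μ := by
    ext i j
    rw [LinearMap.toMatrix_apply, OrthonormalBasis.coe_toBasis, happ j, map_smul,
      ← OrthonormalBasis.coe_toBasis, Module.Basis.repr_self]
    by_cases h : i = j
    · simp [Matrix.diagonal_apply, Finsupp.single_apply, h]
    · simp only [Matrix.diagonal_apply, Finsupp.smul_single, smul_eq_mul, mul_one,
        Finsupp.single_apply, if_neg h]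
      rw [if_neg (fun hji => h hji.symm)]
  have hdet : LinearMap.det T = ∏ i, μ i := by
    rw [← LinearMap.det_toMatrix b.toBasis, hmat, Matrix.det_diagonal]
  have htr : LinearMap.trace ℝ E T = ∑ i, μ i := by
    rw [LinearMap.trace_eq_matrix_trace ℝ b.toBasis, hmat, Matrix.trace_diagonal]
  have hdetpos : 0 < LinearMap.det T := by
    rw [hdet]; exact Finset.prod_pos fun i _ => hμpos i
  refine ⟨hdetpos, ?_⟩
  rcases Nat.eq_zero_or_pos n with h0 | h0
  · rw [htr]
    simp only [h0, Nat.cast_zero, zero_mul]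
    exact Finset.sum_nonneg fun i _ => (hμpos i).le
  · have hnR : (0:ℝ) < n := by exact_mod_cast h0
    have amgm := Real.geom_mean_le_arith_mean_weighted Finset.univ (fun _ => (n:ℝ)⁻¹) μ
      (fun i _ => by positivity) (by simp [Finset.card_univ]; field_simp) (fun i _ => (hμpos i).le)
    have hlhs : ∏ i, μ i ^ ((n:ℝ)⁻¹) = (∏ i, μ i) ^ ((n:ℝ)⁻¹) := by
      rw [← Real.finset_prod_rpow _ _ (fun i _ => (hμpos i).le)]
    have hrhs : ∑ i : Fin n, (n:ℝ)⁻¹ * μ i = (n:ℝ)⁻¹ * ∑ i, μ i := by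
      rw [Finset.mul_sum]
    rw [hlhs, hrhs] at amgm
    rw [hdet, htr]
    calc (n:ℝ) * (∏ i, μ i) ^ ((n:ℝ)⁻¹) ≤ (n:ℝ) * ((n:ℝ)⁻¹ * ∑ i, μ i) := by
          exact mul_le_mul_of_nonneg_left amgm hnR.le
      _ = ∑ i, μ i := by field_simp


lemma aux_det_int {A : Type*} [DivisionRing A] [CharZero A]
    [FiniteDimensional ℚ A] (O : Subring A) [Module.Finite ℤ O]
    (hspan : Submodule.span ℚ (O : Set A) = ⊤)
    (f : A →ₗ[ℚ] A) (hf : ∀ y ∈ O, f y ∈ O) :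
    ∃ m : ℤ, LinearMap.det f = (m : ℚ) := by
  haveI : NoZeroSMulDivisors ℤ O := by
    refine ⟨fun {n o} h => ?_⟩
    have h' : (n : ℤ) • (o : A) = 0 := by
      rw [← Subring.coe_zero O, ← h]; rfl
    rcases smul_eq_zero.mp h' with h1 | h2
    · exact Or.inl h1
    · exact Or.inr (Subtype.ext (by simpa using h2))
  let ι := Module.Free.ChooseBasisIndex ℤ O
  let b : Module.Basis ι ℤ O := Module.Free.chooseBasis ℤ O
  let j : O →ₗ[ℤ] A := (Subring.subtype O).toAddMonoidHom.toIntLinearMap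
  have hjinj : Function.Injective j := Subtype.coe_injective
  let c : ι → A := fun i => (b i : A)
  have hli : LinearIndependent ℚ c := by
    rw [← LinearIndependent.iff_fractionRing ℤ ℚ]
    have := b.linearIndependent.map' j (LinearMap.ker_eq_bot.mpr hjinj)
    exact this
  have hrange : ∀ y : O, (y : A) ∈ Submodule.span ℤ (Set.range c) := by
    intro y
    have : y ∈ Submodule.span ℤ (Set.range b) := by rw [b.span_eq]; trivial
    have h2 : j y ∈ Submodule.map j (Submodule.span ℤ (Set.range b)) :=
      Submodule.mem_map_of_mem this
    rw [Submodule.map_span] at h2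
    have : j '' Set.range b = Set.range c := by
      rw [← Set.range_comp]; rfl
    rwa [this] at h2
  have hsp : ⊤ ≤ Submodule.span ℚ (Set.range c) := by
    rw [← hspan, Submodule.span_le]
    intro y hy
    have h1 := hrange ⟨y, hy⟩
    have h2 : Submodule.span ℤ (Set.range c) ≤
        (Submodule.span ℚ (Set.range c)).restrictScalars ℤ :=
      Submodule.span_le.mpr Submodule.subset_span
    exact h2 h1
  let cb : Module.Basis ι ℚ A := Module.Basis.mk hli hsp
  have hcb : ∀ i, cb i = c i := fun i => Module.Basis.mk_apply hli hsp i
  have hrep : ∀ (y : O) (i : ι), cb.repr (y : A) i = ((b.repr y i : ℤ) : ℚ) := by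
    intro y i
    have hy : (y : A) = ∑ k, ((b.repr y k : ℤ) : ℚ) • c k := by
      conv_lhs => rw [← b.sum_repr y]
      rw [show ((∑ k, b.repr y k • b k : O) : A) = ∑ k, (((b.repr y k • b k : O)) : A) from by
        push_cast; rfl]
      congr 1; funext k
      rw [show (((b.repr y k • b k : O)) : A) = (b.repr y k : ℤ) • (b k : A) from rfl]
      rw [Int.cast_smul_eq_zsmul]
    rw [hy, map_sum]
    simp only [map_smul]
    have : ∀ k, cb.repr (c k) = Finsupp.single k 1 := by
      intro k; rw [← hcb k, cb.repr_self]
    simp only [this]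
    simp [Finsupp.single_apply]
  classical
  let g : ι → O := fun k => ⟨f (c k), hf _ (b k).2⟩
  let M : Matrix ι ι ℤ := fun i k => b.repr (g k) i
  have hmat : LinearMap.toMatrix cb cb f = M.map (Int.cast : ℤ → ℚ) := by
    ext i k
    rw [LinearMap.toMatrix_apply, hcb k, Matrix.map_apply]
    exact hrep (g k) i
  refine ⟨M.det, ?_⟩
  rw [← LinearMap.det_toMatrix cb, hmat,
    show M.map (Int.cast : ℤ → ℚ) = (Int.castRingHom ℚ).mapMatrix M from rfl,
    ← RingHom.map_det]
  rfl


lemma aux_span_rat {K : Type*} [Field K] [NumberField K]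
    {A : Type*} [DivisionRing A] [CharZero A] [Algebra K A] [IsScalarTower ℚ K A]
    (O : Subring A)
    (hOstab : ∀ c : 𝓞 K, ∀ y ∈ O, algebraMap K A c * y ∈ O)
    (hOspan : Submodule.span K (O : Set A) = ⊤) :
    Submodule.span ℚ (O : Set A) = ⊤ := by
  have hVmem : ∀ (cK : K) (v : A), v ∈ Submodule.span ℚ (O : Set A) →
      cK • v ∈ Submodule.span ℚ (O : Set A) := by
    intro cK v hv
    induction hv using Submodule.span_induction with
    | mem o ho =>
      obtain ⟨m, hm0, hint⟩ := exists_integral_multiples ℤ ℚ ({cK} : Finset K)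
      have hint' := hint cK (Finset.mem_singleton_self cK)
      set d : 𝓞 K := ⟨m • cK, hint'⟩ with hd
      have hdK : (d : K) = m • cK := rfl
      have hmem : algebraMap K A (d : K) * o ∈ O := hOstab d o ho
      have hmQ : (m : ℚ) ≠ 0 := Int.cast_ne_zero.mpr hm0
      have key : cK • o = ((m : ℚ))⁻¹ • (algebraMap K A (d : K) * o) := by
        rw [← Algebra.smul_def, hdK, smul_assoc, ← Int.cast_smul_eq_zsmul ℚ,
          inv_smul_smul₀ hmQ]
      rw [key]
      exact Submodule.smul_mem _ _ (Submodule.subset_span hmem)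
    | zero => simp
    | add u w _ _ ihu ihw => rw [smul_add]; exact Submodule.add_mem _ ihu ihw
    | smul q u _ ihu =>
      rw [smul_comm]
      exact Submodule.smul_mem _ _ ihu
  let p : Submodule K A :=
    { carrier := (Submodule.span ℚ (O : Set A) : Set A)
      add_mem' := fun h1 h2 => Submodule.add_mem _ h1 h2
      zero_mem' := Submodule.zero_mem _
      smul_mem' := fun cK v hv => hVmem cK v hv }
  have hle : Submodule.span K (O : Set A) ≤ p := Submodule.span_le.mpr Submodule.subset_span
  rw [hOspan] at hle
  exact Submodule.eq_top_iff'.mpr fun y => hle Submodule.mem_top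

set_option maxHeartbeats 1000000 in
/-- **Lower bound for the shortest vector of a maximal order.**
Let `A` be a central simple division algebra over a number field `K`, with maximal order `O`
viewed as a lattice in `A_ℝ = ℝ ⊗_ℚ A` via the quadratic form `q_a(x) = Tr(x* a x)` for a
symmetric positive definite `a`. Then the shortest vector length satisfies
`λ₁(O) ≥ √[A:ℚ] · N(a)^(1/(2[A:ℚ]))`, i.e. every nonzero `x ∈ O` satisfies this bound. -/
theorem stmt8 (K : Type*) [Field K] [NumberField K]
    (A : Type*) [DivisionRing A] [CharZero A] [Algebra K A] [Algebra.IsCentral K A]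
    [FiniteDimensional K A] [IsScalarTower ℚ K A]
    -- `O` is a maximal order in `A`:
    (O : Subring A)
    (hOstab : ∀ c : 𝓞 K, ∀ y ∈ O, algebraMap K A c * y ∈ O)
    (hOfin : Module.Finite ℤ O)
    (hOspan : Submodule.span K (O : Set A) = ⊤)
    (hOmax : ∀ O' : Subring A, (∀ c : 𝓞 K, ∀ y ∈ O', algebraMap K A c * y ∈ O') →
      Module.Finite ℤ O' → Submodule.span K (O' : Set A) = ⊤ → O ≤ O' → O' = O)
    -- positive involution on `A_ℝ = ℝ ⊗[ℚ] A` and symmetric positive definite `a`: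
    [StarRing (ℝ ⊗[ℚ] A)] [StarModule ℝ (ℝ ⊗[ℚ] A)]
    (hpos : ∀ z : ℝ ⊗[ℚ] A, z ≠ 0 →
      0 < LinearMap.trace ℝ (ℝ ⊗[ℚ] A) (LinearMap.mulLeft ℝ (star z * z)))
    (a : ℝ ⊗[ℚ] A) (ha : star a = a)
    (hapos : ∀ z : ℝ ⊗[ℚ] A, z ≠ 0 →
      0 < LinearMap.trace ℝ (ℝ ⊗[ℚ] A) (LinearMap.mulLeft ℝ (star z * a * z))) :
    ∀ x ∈ O, x ≠ 0 →
      Real.sqrt (LinearMap.trace ℝ (ℝ ⊗[ℚ] A) (LinearMap.mulLeft ℝ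
          (star ((1 : ℝ) ⊗ₜ[ℚ] x) * a * ((1 : ℝ) ⊗ₜ[ℚ] x)))) ≥
        Real.sqrt (Module.finrank ℚ A) *
          (LinearMap.det (LinearMap.mulLeft ℝ a)) ^ (1 / (2 * (Module.finrank ℚ A : ℝ))) := by
  intro x hx hx0
  haveI : Module.Finite ℚ A := Module.Finite.trans K A
  set n := Module.finrank ℚ A with hnA
  have hfinB : Module.finrank ℝ (ℝ ⊗[ℚ] A) = n := Module.finrank_baseChange
  have hn0 : 0 < n := Module.finrank_pos
  have hnne : (n : ℝ) ≠ 0 := by positivity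
  haveI : Nontrivial (ℝ ⊗[ℚ] A) :=
    Module.nontrivial_of_finrank_pos (R := ℝ) (hfinB ▸ hn0)
  -- invertibility of 1 ⊗ x
  set xh : ℝ ⊗[ℚ] A := (1:ℝ) ⊗ₜ[ℚ] x with hxhdef
  set xhi : ℝ ⊗[ℚ] A := (1:ℝ) ⊗ₜ[ℚ] x⁻¹ with hxhidef
  have hunit : xh * xhi = 1 := by
    rw [hxhdef, hxhidef, Algebra.TensorProduct.tmul_mul_tmul, mul_inv_cancel₀ hx0, mul_one,
      Algebra.TensorProduct.one_def]
  have hunit' : xhi * xh = 1 := by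
    rw [hxhdef, hxhidef, Algebra.TensorProduct.tmul_mul_tmul, inv_mul_cancel₀ hx0, mul_one,
      Algebra.TensorProduct.one_def]
  have hxhne : xh ≠ 0 := by
    intro h
    rw [h, zero_mul] at hunit
    exact zero_ne_one hunit
  -- the linear functional u ↦ Tr(mulLeft u)
  let Tl : (ℝ ⊗[ℚ] A) → ℝ := fun u => LinearMap.trace ℝ (ℝ ⊗[ℚ] A) (LinearMap.mulLeft ℝ u)
  have hTl : ∀ u, Tl u = LinearMap.trace ℝ (ℝ ⊗[ℚ] A) (LinearMap.mulLeft ℝ u) := fun u => rfl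
  have hTladd : ∀ u v, Tl (u + v) = Tl u + Tl v := by
    intro u v
    have h : LinearMap.mulLeft ℝ (u + v) = LinearMap.mulLeft ℝ u + LinearMap.mulLeft ℝ v := by
      apply LinearMap.ext; intro w
      simp [add_mul]
    simp only [hTl, h, map_add]
  have hTlsmul : ∀ (r : ℝ) (u : ℝ ⊗[ℚ] A), Tl (r • u) = r * Tl u := by
    intro r u
    have h : LinearMap.mulLeft ℝ (r • u) = r • LinearMap.mulLeft ℝ u := by
      apply LinearMap.ext; intro w
      simp [smul_mul_assoc]
    simp only [hTl, h, map_smul, smul_eq_mul]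
  have hTpos : ∀ z : ℝ ⊗[ℚ] A, z ≠ 0 → 0 < Tl (star z * z) := fun z hz => by
    rw [hTl]; exact hpos z hz
  have hTapos : ∀ z : ℝ ⊗[ℚ] A, z ≠ 0 → 0 < Tl (star z * a * z) := fun z hz => by
    rw [hTl]; exact hapos z hz
  -- inner product structure
  let core : InnerProductSpace.Core ℝ (ℝ ⊗[ℚ] A) :=
    { inner := fun z w => Tl (star z * w) + Tl (star w * z)
      conj_inner_symm := fun z w => by
        simp only [starRingEnd_apply, star_trivial]
        exact add_comm _ _
      re_inner_nonneg := fun z => by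
        rcases eq_or_ne z 0 with rfl | hz
        · simp [hTl]
        · have := hTpos z hz
          simp only [RCLike.re_to_real]
          linarith
      add_left := fun u v w => by
        simp only [star_add, add_mul, mul_add, hTladd]
        ring
      smul_left := fun u v r => by
        simp only [star_smul, star_trivial, smul_mul_assoc, mul_smul_comm, hTlsmul,
          starRingEnd_apply, smul_eq_mul]
        ring
      definite := fun z hz => by
        by_contra h0
        have := hTpos z h0
        change Tl (star z * z) + Tl (star z * z) = 0 at hz
        linarith [congrArg id hz] }
  letI : NormedAddCommGroup (ℝ ⊗[ℚ] A) := core.toNormedAddCommGroup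
  letI : InnerProductSpace ℝ (ℝ ⊗[ℚ] A) := InnerProductSpace.ofCore core.toCore
  have hinner : ∀ z w : ℝ ⊗[ℚ] A, ⟪z, w⟫ = Tl (star z * w) + Tl (star w * z) := fun z w => rfl
  -- the operator M = mulLeft (x* a x)
  set b0 : ℝ ⊗[ℚ] A := star xh * a * xh with hb0def
  have hb0star : star b0 = b0 := by
    rw [hb0def]
    simp only [star_mul, star_star, ha, mul_assoc]
  set M : (ℝ ⊗[ℚ] A) →ₗ[ℝ] (ℝ ⊗[ℚ] A) := LinearMap.mulLeft ℝ b0 with hMdef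
  have hMsym : M.IsSymmetric := by
    intro z w
    rw [hinner, hinner]
    simp only [hMdef, LinearMap.mulLeft_apply, star_mul, hb0star, mul_assoc]
  have haux1 : ∀ z : ℝ ⊗[ℚ] A, star z * (b0 * z) = star (xh * z) * a * (xh * z) := by
    intro z
    rw [hb0def]
    simp only [star_mul, mul_assoc]
  have hMpos : ∀ z : ℝ ⊗[ℚ] A, z ≠ 0 → 0 < ⟪z, M z⟫ := by
    intro z hz
    have hw : xh * z ≠ 0 := by
      intro h
      apply hz
      calc z = 1 * z := (one_mul z).symm
        _ = xhi * (xh * z) := by rw [← hunit', mul_assoc]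
        _ = 0 := by rw [h, mul_zero]
    have h2 : star (b0 * z) * z = star (xh * z) * a * (xh * z) := by
      calc star (b0 * z) * z = (star z * star b0) * z := by rw [star_mul]
        _ = star z * (b0 * z) := by rw [hb0star, mul_assoc]
        _ = _ := haux1 z
    rw [hinner]
    simp only [hMdef, LinearMap.mulLeft_apply]
    rw [h2, haux1 z]
    have := hTapos (xh * z) hw
    linarith
  -- the operator mulLeft a
  have hasym : (LinearMap.mulLeft ℝ a).IsSymmetric := by
    intro z w
    rw [hinner, hinner]
    simp only [LinearMap.mulLeft_apply, star_mul, ha, mul_assoc]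
  have hapos' : ∀ z : ℝ ⊗[ℚ] A, z ≠ 0 → 0 < ⟪z, LinearMap.mulLeft ℝ a z⟫ := by
    intro z hz
    rw [hinner]
    simp only [LinearMap.mulLeft_apply]
    have h1 : star (a * z) * z = star z * a * z := by rw [star_mul, ha, mul_assoc]
    rw [h1, ← mul_assoc]
    have := hTapos z hz
    linarith
  obtain ⟨hdeta_pos, _⟩ := aux_trace_det (LinearMap.mulLeft ℝ a) hasym hapos'
  obtain ⟨hdetM_pos, htrM⟩ := aux_trace_det M hMsym hMpos
  rw [hfinB] at htrM
  -- determinant factorization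
  have hdetM : LinearMap.det M =
      LinearMap.det (LinearMap.mulLeft ℝ (star xh)) *
        (LinearMap.det (LinearMap.mulLeft ℝ a) * LinearMap.det (LinearMap.mulLeft ℝ xh)) := by
    rw [hMdef, hb0def, LinearMap.mulLeft_mul, LinearMap.mulLeft_mul, LinearMap.det_comp,
      LinearMap.det_comp]
    ring
  -- base change determinants
  have hbc1 : LinearMap.mulLeft ℝ xh = (LinearMap.mulLeft ℚ x).baseChange ℝ := by
    apply LinearMap.ext
    intro z
    induction z using TensorProduct.induction_on with
    | zero => simp
    | tmul r y =>
      simp [hxhdef, Algebra.TensorProduct.tmul_mul_tmul]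
    | add u v hu hv =>
      simp only [map_add, LinearMap.mulLeft_apply, mul_add] at hu hv ⊢
      rw [hu, hv]
  have hbc2 : LinearMap.mulRight ℝ xh = (LinearMap.mulRight ℚ x).baseChange ℝ := by
    apply LinearMap.ext
    intro z
    induction z using TensorProduct.induction_on with
    | zero => simp
    | tmul r y =>
      simp [hxhdef, Algebra.TensorProduct.tmul_mul_tmul]
    | add u v hu hv =>
      simp only [map_add, LinearMap.mulRight_apply, add_mul] at hu hv ⊢
      rw [hu, hv]
  have hdet1 : LinearMap.det (LinearMap.mulLeft ℝ xh) =
      ((LinearMap.det (LinearMap.mulLeft ℚ x) : ℚ) : ℝ) := by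
    rw [hbc1, LinearMap.det_baseChange, eq_ratCast]
  have hdet2 : LinearMap.det (LinearMap.mulRight ℝ xh) =
      ((LinearMap.det (LinearMap.mulRight ℚ x) : ℚ) : ℝ) := by
    rw [hbc2, LinearMap.det_baseChange, eq_ratCast]
  -- star conjugation
  have hdetstar : LinearMap.det (LinearMap.mulLeft ℝ (star xh)) =
      LinearMap.det (LinearMap.mulRight ℝ xh) := by
    let s : (ℝ ⊗[ℚ] A) →ₗ[ℝ] (ℝ ⊗[ℚ] A) := (starLinearEquiv ℝ (A := ℝ ⊗[ℚ] A)).toLinearMap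
    have hsapp : ∀ z, s z = star z := fun z => rfl
    have hss : s ∘ₗ s = LinearMap.id := by
      apply LinearMap.ext; intro z; simp [hsapp, star_star]
    have hsl : LinearMap.mulLeft ℝ (star xh) = s ∘ₗ (LinearMap.mulRight ℝ xh) ∘ₗ s := by
      apply LinearMap.ext
      intro z
      simp [hsapp, LinearMap.mulLeft_apply, LinearMap.mulRight_apply, star_mul, star_star]
    have h1 : LinearMap.det s * LinearMap.det s = 1 := by
      rw [← LinearMap.det_comp, hss, LinearMap.det_id]
    calc LinearMap.det (LinearMap.mulLeft ℝ (star xh))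
        = LinearMap.det s * (LinearMap.det (LinearMap.mulRight ℝ xh) * LinearMap.det s) := by
          rw [hsl, LinearMap.det_comp, LinearMap.det_comp]
      _ = (LinearMap.det s * LinearMap.det s) * LinearMap.det (LinearMap.mulRight ℝ xh) := by
          ring
      _ = LinearMap.det (LinearMap.mulRight ℝ xh) := by rw [h1, one_mul]
  -- integrality
  have hspanQ := aux_span_rat O hOstab hOspan
  haveI := hOfin
  obtain ⟨m1, hm1⟩ := aux_det_int O hspanQ (LinearMap.mulLeft ℚ x)
    (fun y hy => O.mul_mem hx hy)
  obtain ⟨m2, hm2⟩ := aux_det_int O hspanQ (LinearMap.mulRight ℚ x)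
    (fun y hy => O.mul_mem hy hx)
  -- combined
  have hD : LinearMap.det (LinearMap.mulLeft ℝ (star xh)) *
      LinearMap.det (LinearMap.mulLeft ℝ xh) = ((m2 * m1 : ℤ) : ℝ) := by
    rw [hdetstar, hdet2, hdet1, hm1, hm2]
    push_cast
    ring
  have hDpos : (0:ℝ) < ((m2 * m1 : ℤ) : ℝ) := by
    rw [← hD]
    nlinarith [hdetM_pos, hdeta_pos, hdetM]
  have hge1 : (1:ℝ) ≤ ((m2 * m1 : ℤ) : ℝ) := by
    have h0 : (0:ℤ) < m2 * m1 := by exact_mod_cast hDpos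
    exact_mod_cast h0
  have hdetMge : LinearMap.det (LinearMap.mulLeft ℝ a) ≤ LinearMap.det M := by
    calc LinearMap.det (LinearMap.mulLeft ℝ a)
        = 1 * LinearMap.det (LinearMap.mulLeft ℝ a) := (one_mul _).symm
      _ ≤ ((m2 * m1 : ℤ) : ℝ) * LinearMap.det (LinearMap.mulLeft ℝ a) :=
          mul_le_mul_of_nonneg_right hge1 hdeta_pos.le
      _ = LinearMap.det M := by rw [hdetM, ← hD]; ring
  -- final computation
  set dA := LinearMap.det (LinearMap.mulLeft ℝ a) with hdA
  have h1 : (n:ℝ) * dA ^ ((n:ℝ)⁻¹) ≤ (n:ℝ) * (LinearMap.det M) ^ ((n:ℝ)⁻¹) :=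
    mul_le_mul_of_nonneg_left
      (Real.rpow_le_rpow hdeta_pos.le hdetMge (by positivity)) (by positivity)
  have h2 : (n:ℝ) * dA ^ ((n:ℝ)⁻¹) ≤
      LinearMap.trace ℝ (ℝ ⊗[ℚ] A) M := le_trans h1 htrM
  have hrw : Real.sqrt ((n:ℝ) * dA ^ ((n:ℝ)⁻¹)) =
      Real.sqrt (n:ℝ) * dA ^ (1 / (2 * (n:ℝ))) := by
    rw [Real.sqrt_mul (by positivity)]
    congr 1
    rw [Real.sqrt_eq_rpow, ← Real.rpow_mul hdeta_pos.le]
    congr 1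
    field_simp
  rw [ge_iff_le, ← hrw]
  exact Real.sqrt_le_sqrt h2
end

section
/- Let A be a central simple division algebra over a number field K of total Q-dimension d = [A:Q], O a maximal order, and q_a(x) = Tr(x*ax) as above. For any two-sided O-ideal I (a full O_K-lattice in O), the Hermite parameter satisfies γ_{q_a}(I) ≥ d / d(O/Z)^{1/d}, where γ_{q_a}(I) = min_{x ∈ I, x ≠ 0} q_a(x) / det_{q_a}(I)^{1/d} and d(O/Z) is the discriminant of O over Z. -/
open scoped Matrix

set_option maxHeartbeats 2000000

private lemma det_pos_of_quadform {n : ℕ} (M : Matrix (Fin n) (Fin n) ℝ)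
    (h : ∀ x : Fin n → ℝ, x ≠ 0 → 0 < x ⬝ᵥ (M *ᵥ x)) : 0 < M.det := by
  by_contra hle
  push_neg at hle
  set f : ℝ → ℝ := fun t => ((1 - t) • (1 : Matrix (Fin n) (Fin n) ℝ) + t • M).det with hf
  have hcont : Continuous f := by
    apply Continuous.matrix_det
    fun_prop
  have h0 : f 0 = 1 := by simp [hf]
  have h1 : f 1 = M.det := by simp [hf]
  obtain ⟨t, ht, hdet0⟩ : ∃ t ∈ Set.Icc (0:ℝ) 1, f t = 0 := by
    have hsub := intermediate_value_Icc' (zero_le_one) hcont.continuousOn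
    have : (0:ℝ) ∈ Set.Icc (f 1) (f 0) := by
      rw [h0, h1]; exact ⟨hle, zero_le_one⟩
    obtain ⟨t, ht, hft⟩ := hsub this
    exact ⟨t, ht, hft⟩
  obtain ⟨v, hv, hMv⟩ := (Matrix.exists_mulVec_eq_zero_iff).mpr hdet0
  have hexp : ((1 - t) • (1 : Matrix (Fin n) (Fin n) ℝ) + t • M) *ᵥ v
      = (1 - t) • v + t • (M *ᵥ v) := by
    rw [Matrix.add_mulVec, Matrix.smul_mulVec, Matrix.smul_mulVec, Matrix.one_mulVec]
  have hzero : (1 - t) * (v ⬝ᵥ v) + t * (v ⬝ᵥ (M *ᵥ v)) = 0 := by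
    have := congrArg (fun w => v ⬝ᵥ w) (hexp.symm.trans hMv)
    simpa [dotProduct_add, dotProduct_smul, smul_eq_mul] using this
  have hvv : 0 < v ⬝ᵥ v := by
    have h1 : 0 ≤ v ⬝ᵥ v := Finset.sum_nonneg fun i _ => mul_self_nonneg _
    rcases h1.lt_or_eq with h2 | h2
    · exact h2
    · exact absurd (dotProduct_self_eq_zero.mp h2.symm) hv
  have hMvv : 0 < v ⬝ᵥ (M *ᵥ v) := h v hv
  have ht0 : 0 ≤ t := ht.1
  have ht1 : t ≤ 1 := ht.2
  have hA : 0 ≤ (1 - t) * (v ⬝ᵥ v) := mul_nonneg (by linarith) hvv.le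
  have hB : 0 ≤ t * (v ⬝ᵥ (M *ᵥ v)) := mul_nonneg ht0 hMvv.le
  have hAB := (add_eq_zero_iff_of_nonneg hA hB).mp hzero
  have ht1' : t = 1 := by
    rcases mul_eq_zero.mp hAB.1 with h' | h'
    · linarith
    · exact absurd h' hvv.ne'
  have ht0' : t = 0 := by
    rcases mul_eq_zero.mp hAB.2 with h' | h'
    · exact h'
    · exact absurd h' hMvv.ne'
  rw [ht0'] at ht1'; norm_num at ht1'

private lemma trace_amgm {n : ℕ} {H : Matrix (Fin n) (Fin n) ℝ} (hH : H.PosSemidef) :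
    (n : ℝ) * H.det ^ (1 / (n : ℝ)) ≤ H.trace := by
  classical
  have hherm := hH.isHermitian
  have hev : ∀ i, 0 ≤ hherm.eigenvalues i := fun i => hH.eigenvalues_nonneg i
  have htr : H.trace = ∑ i, hherm.eigenvalues i := by
    simpa using hherm.trace_eq_sum_eigenvalues
  have hdet : H.det = ∏ i, hherm.eigenvalues i := by
    simpa [RCLike.ofReal_real_eq_id] using hherm.det_eq_prod_eigenvalues
  rcases Nat.eq_zero_or_pos n with hn | hn
  · subst hn
    simp [htr, hdet]
  have hn' : (0 : ℝ) < n := by exact_mod_cast hn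
  have amgm := Real.geom_mean_le_arith_mean_weighted Finset.univ (fun _ => 1 / (n : ℝ))
    hherm.eigenvalues (fun i _ => by positivity)
    (by simp; field_simp) (fun i _ => hev i)
  rw [Real.finset_prod_rpow _ _ (fun i _ => hev i)] at amgm
  have hsum : ∑ i, (1 / (n : ℝ)) * hherm.eigenvalues i = (1 / n) * ∑ i, hherm.eigenvalues i := by
    rw [Finset.mul_sum]
  rw [hsum] at amgm
  rw [htr, hdet]
  calc (n : ℝ) * (∏ i, hherm.eigenvalues i) ^ (1 / (n : ℝ))
      ≤ (n : ℝ) * ((1 / n) * ∑ i, hherm.eigenvalues i) := by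
        exact mul_le_mul_of_nonneg_left amgm hn'.le
    _ = ∑ i, hherm.eigenvalues i := by field_simp

private lemma key_amgm {n : ℕ} (W M : Matrix (Fin n) (Fin n) ℝ)
    (hW : W.PosDef) (hWM : (W * M).PosDef) :
    0 < M.det ∧ (n : ℝ) * M.det ^ (1 / (n : ℝ)) ≤ M.trace := by
  classical
  have hWdet : 0 < W.det := hW.det_pos
  have hWMdet : 0 < (W * M).det := hWM.det_pos
  rw [Matrix.det_mul] at hWMdet
  have hMdet : 0 < M.det := by
    rcases mul_pos_iff.mp hWMdet with ⟨_, h⟩ | ⟨h, _⟩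
    · exact h
    · linarith
  refine ⟨hMdet, ?_⟩
  have hWunit : IsUnit W.det := isUnit_iff_ne_zero.mpr hWdet.ne'
  set S := W * M with hS
  obtain ⟨R, hRR, hRherm⟩ : ∃ R : Matrix (Fin n) (Fin n) ℝ, R * R = S ∧ Rᴴ = R := by
    open scoped MatrixOrder in
    exact ⟨CFC.sqrt S, CFC.sqrt_mul_sqrt_self S (Matrix.nonneg_iff_posSemidef.mpr hWM.posSemidef),
      (Matrix.nonneg_iff_posSemidef.mp (CFC.sqrt_nonneg S)).isHermitian⟩
  have hM : M = W⁻¹ * (R * R) := by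
    rw [hRR, hS, Matrix.nonsing_inv_mul_cancel_left _ _ hWunit]
  have hHps : (R * W⁻¹ * R).PosSemidef := by
    have := hW.inv.posSemidef.mul_mul_conjTranspose_same R
    rwa [hRherm] at this
  have htr : M.trace = (R * W⁻¹ * R).trace := by
    rw [hM, ← Matrix.mul_assoc, Matrix.trace_mul_comm (W⁻¹ * R) R, ← Matrix.mul_assoc]
  have hdet : M.det = (R * W⁻¹ * R).det := by
    rw [hM]
    simp only [Matrix.det_mul]
    ring
  rw [htr, hdet]
  exact trace_amgm hHps



open scoped NumberField TensorProduct

/-- **Hermite parameter lower bound for two-sided ideals.**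
Let `A` be a central simple division algebra over a number field `K` of total `ℚ`-dimension
`d = [A:ℚ]`, `O` a maximal order with `ℤ`-basis `bO`, and `q_a(x) = Tr(x* a x)` the quadratic
form on `A_ℝ = ℝ ⊗_ℚ A` for a symmetric positive definite `a`. For any two-sided `O`-ideal
`I` (a full `ℤ`-lattice in `A` with `ℤ`-basis `bI`, stable under both-sided multiplication
by `O`), the Hermite parameter satisfies `γ_{q_a}(I) ≥ d / d(O/ℤ)^(1/d)`, i.e. for every
nonzero `x ∈ I`, `q_a(x) / det_{q_a}(I)^(1/d) ≥ d / d(O/ℤ)^(1/d)`, where `det_{q_a}(I)` is the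
Gram determinant of `q_a` in the basis `bI`, and `d(O/ℤ)` is the Gram determinant of the trace
form in the basis `bO` (the discriminant of `O` over `ℤ`). -/
theorem stmt9 (K : Type*) [Field K] [NumberField K]
    (A : Type*) [DivisionRing A] [CharZero A] [Algebra K A] [Algebra.IsCentral K A]
    [FiniteDimensional K A] [IsScalarTower ℚ K A]
    (d : ℕ) (hd : Module.finrank ℚ A = d)
    -- `O` is a maximal order in `A`, with `ℤ`-basis `bO`:
    (O : Subring A)
    (hOstab : ∀ c : 𝓞 K, ∀ y ∈ O, algebraMap K A c * y ∈ O)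
    (hOfin : Module.Finite ℤ O)
    (hOspan : Submodule.span K (O : Set A) = ⊤)
    (hOmax : ∀ O' : Subring A, (∀ c : 𝓞 K, ∀ y ∈ O', algebraMap K A c * y ∈ O') →
      Module.Finite ℤ O' → Submodule.span K (O' : Set A) = ⊤ → O ≤ O' → O' = O)
    (bO : Fin d → A) (hbO : LinearIndependent ℤ bO)
    (hbOspan : ∀ x : A, x ∈ O ↔ x ∈ Submodule.span ℤ (Set.range bO))
    -- positive involution on `A_ℝ = ℝ ⊗[ℚ] A` and symmetric positive definite `a`:
    [StarRing (ℝ ⊗[ℚ] A)] [StarModule ℝ (ℝ ⊗[ℚ] A)]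
    (hpos : ∀ z : ℝ ⊗[ℚ] A, z ≠ 0 →
      0 < LinearMap.trace ℝ (ℝ ⊗[ℚ] A) (LinearMap.mulLeft ℝ (star z * z)))
    (a : ℝ ⊗[ℚ] A) (ha : star a = a)
    (hapos : ∀ z : ℝ ⊗[ℚ] A, z ≠ 0 →
      0 < LinearMap.trace ℝ (ℝ ⊗[ℚ] A) (LinearMap.mulLeft ℝ (star z * a * z)))
    -- `I` is a two-sided `O`-ideal which is a full `ℤ`-lattice, with `ℤ`-basis `bI`:
    (I : Submodule ℤ A)
    (hI : ∀ r ∈ O, ∀ x ∈ I, r * x ∈ I ∧ x * r ∈ I)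
    (bI : Fin d → A) (hbI : LinearIndependent ℤ bI)
    (hbIspan : Submodule.span ℤ (Set.range bI) = I) :
    ∀ x ∈ I, x ≠ 0 →
      LinearMap.trace ℝ (ℝ ⊗[ℚ] A) (LinearMap.mulLeft ℝ
          (star ((1 : ℝ) ⊗ₜ[ℚ] x) * a * ((1 : ℝ) ⊗ₜ[ℚ] x))) /
        (Matrix.det (Matrix.of fun i j : Fin d =>
          LinearMap.trace ℝ (ℝ ⊗[ℚ] A) (LinearMap.mulLeft ℝ
            (star ((1 : ℝ) ⊗ₜ[ℚ] bI i) * a * ((1 : ℝ) ⊗ₜ[ℚ] bI j))))) ^ (1 / (d : ℝ)) ≥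
      (d : ℝ) /
        (Matrix.det (Matrix.of fun i j : Fin d =>
          LinearMap.trace ℝ (ℝ ⊗[ℚ] A) (LinearMap.mulLeft ℝ
            (star ((1 : ℝ) ⊗ₜ[ℚ] bO i) * ((1 : ℝ) ⊗ₜ[ℚ] bO j))))) ^ (1 / (d : ℝ)) := by
  classical
  intro x hxI hx0
  haveI : Module.Finite ℚ A := Module.Finite.trans K A
  have hdpos : 0 < d := by rw [← hd]; exact Module.finrank_pos
  haveI : Nonempty (Fin d) := ⟨⟨0, hdpos⟩⟩
  -- ℚ-bases from the ℤ-bases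
  have hbOQ : LinearIndependent ℚ bO := (LinearIndependent.iff_fractionRing ℤ ℚ).mp hbO
  have hbIQ : LinearIndependent ℚ bI := (LinearIndependent.iff_fractionRing ℤ ℚ).mp hbI
  set bQO : Module.Basis (Fin d) ℚ A :=
    basisOfLinearIndependentOfCardEqFinrank hbOQ (by rw [Fintype.card_fin, hd]) with hbQOdef
  set bQI : Module.Basis (Fin d) ℚ A :=
    basisOfLinearIndependentOfCardEqFinrank hbIQ (by rw [Fintype.card_fin, hd]) with hbQIdef
  have hbQO : ⇑bQO = bO := coe_basisOfLinearIndependentOfCardEqFinrank _ _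
  have hbQI : ⇑bQI = bI := coe_basisOfLinearIndependentOfCardEqFinrank _ _
  set eO : Module.Basis (Fin d) ℝ (ℝ ⊗[ℚ] A) := bQO.baseChange ℝ with heOdef
  have heO : ∀ i, eO i = (1 : ℝ) ⊗ₜ[ℚ] bO i := by
    intro i; rw [heOdef, Module.Basis.baseChange_apply, ← hbQO]
  -- the trace functional
  set T : (ℝ ⊗[ℚ] A) →ₗ[ℝ] ℝ :=
    (LinearMap.trace ℝ (ℝ ⊗[ℚ] A)).comp (LinearMap.mul ℝ (ℝ ⊗[ℚ] A)) with hTdef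
  have hT : ∀ u : ℝ ⊗[ℚ] A,
      T u = LinearMap.trace ℝ (ℝ ⊗[ℚ] A) (LinearMap.mulLeft ℝ u) := fun u => rfl
  -- master expansion lemma
  have hexp : ∀ (v w : Fin d → ℝ ⊗[ℚ] A) (y z : Fin d → ℝ) (c : ℝ ⊗[ℚ] A),
      T (star (∑ i, y i • v i) * c * (∑ j, z j • w j)) =
        ∑ i, ∑ j, y i * z j * T (star (v i) * c * (w j)) := by
    intro v w y z c
    simp only [star_sum, star_smul, star_trivial, Finset.sum_mul, Finset.mul_sum,
      smul_mul_assoc, mul_smul_comm, map_sum, map_smul, smul_eq_mul, mul_assoc]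
    rw [Finset.sum_comm]
    exact Finset.sum_congr rfl fun i _ => Finset.sum_congr rfl fun j _ => by ring
  have hlinR : ∀ (u : ℝ ⊗[ℚ] A) (y : Fin d → ℝ) (v : Fin d → ℝ ⊗[ℚ] A),
      T (u * ∑ k, y k • v k) = ∑ k, y k * T (u * v k) := by
    intro u y v
    simp only [Finset.mul_sum, mul_smul_comm, map_sum, map_smul, smul_eq_mul]
  have hlinL : ∀ (u : ℝ ⊗[ℚ] A) (y : Fin d → ℝ) (v : Fin d → ℝ ⊗[ℚ] A),
      T ((∑ k, y k • v k) * u) = ∑ k, y k * T (v k * u) := by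
    intro u y v
    simp only [Finset.sum_mul, smul_mul_assoc, map_sum, map_smul, smul_eq_mul]
  -- matrices
  set ξ : ℝ ⊗[ℚ] A := (1 : ℝ) ⊗ₜ[ℚ] x with hxidef
  set W1 : Matrix (Fin d) (Fin d) ℝ := Matrix.of fun i j =>
    LinearMap.trace ℝ (ℝ ⊗[ℚ] A) (LinearMap.mulLeft ℝ
      (star ((1 : ℝ) ⊗ₜ[ℚ] bO i) * ((1 : ℝ) ⊗ₜ[ℚ] bO j))) with hW1def
  set GI : Matrix (Fin d) (Fin d) ℝ := Matrix.of fun i j =>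
    LinearMap.trace ℝ (ℝ ⊗[ℚ] A) (LinearMap.mulLeft ℝ
      (star ((1 : ℝ) ⊗ₜ[ℚ] bI i) * a * ((1 : ℝ) ⊗ₜ[ℚ] bI j))) with hGIdef
  set Grm : (ℝ ⊗[ℚ] A) → Matrix (Fin d) (Fin d) ℝ := fun c => Matrix.of fun i j =>
    T (star (eO i) * c * (eO j)) with hGrmdef
  set Mc : (ℝ ⊗[ℚ] A) → Matrix (Fin d) (Fin d) ℝ := fun c =>
    LinearMap.toMatrix eO eO (LinearMap.mulLeft ℝ c) with hMcdef
  have hMc_apply : ∀ (c : ℝ ⊗[ℚ] A) (j : Fin d), c * eO j = ∑ k, Mc c k j • eO k := by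
    intro c j
    conv_lhs => rw [← eO.sum_repr (c * eO j)]
    refine Finset.sum_congr rfl fun k _ => ?_
    simp only [hMcdef, LinearMap.toMatrix_apply, LinearMap.mulLeft_apply]
  have hW1Grm : W1 = Grm 1 := by
    ext i j
    simp only [hW1def, hGrmdef, Matrix.of_apply, one_mul, mul_one, heO, hT]
  have hGrm_mul : ∀ c, Grm c = W1 * Mc c := by
    intro c
    ext i j
    simp only [hGrmdef, Matrix.of_apply]
    rw [mul_assoc, hMc_apply c j, hlinR, Matrix.mul_apply]
    refine Finset.sum_congr rfl fun k _ => ?_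
    rw [hW1def]
    simp only [Matrix.of_apply, heO, hT]
    ring
  have hGrm_tmul : ∀ c, star c = c → W1ᵀ * Mc c = (Grm c)ᵀ := by
    intro c hc
    ext i j
    rw [Matrix.transpose_apply, Matrix.mul_apply]
    have h1 : (Grm c) j i = T (star (c * eO j) * eO i) := by
      simp only [hGrmdef, Matrix.of_apply]
      rw [star_mul, hc, mul_assoc]
    rw [h1, hMc_apply c j]
    rw [star_sum]
    simp only [star_smul, star_trivial]
    rw [hlinL]
    refine Finset.sum_congr rfl fun k _ => ?_
    rw [Matrix.transpose_apply, hW1def]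
    simp only [Matrix.of_apply, heO, hT]
    ring
  have hsum_ne : ∀ y : Fin d → ℝ, y ≠ 0 → (∑ i, y i • eO i) ≠ 0 := by
    intro y hy hsum
    exact hy (funext fun i => Fintype.linearIndependent_iff.mp eO.linearIndependent y hsum i)
  have hquad : ∀ (c : ℝ ⊗[ℚ] A) (y : Fin d → ℝ),
      y ⬝ᵥ (Grm c *ᵥ y) = T (star (∑ i, y i • eO i) * c * (∑ j, y j • eO j)) := by
    intro c y
    rw [hexp]
    simp only [dotProduct, Matrix.mulVec, hGrmdef, Matrix.of_apply, Finset.mul_sum]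
    exact Finset.sum_congr rfl fun i _ => Finset.sum_congr rfl fun j _ => by ring
  have hW1quad : ∀ y : Fin d → ℝ, y ≠ 0 → 0 < y ⬝ᵥ (W1 *ᵥ y) := by
    intro y hy
    rw [hW1Grm, hquad]
    have h2 := hpos _ (hsum_ne y hy)
    rw [hT]
    simpa only [mul_one, one_mul] using h2
  have hW1det : 0 < W1.det := det_pos_of_quadform _ hW1quad
  set Wsym : Matrix (Fin d) (Fin d) ℝ := (1/2 : ℝ) • (W1 + W1ᵀ) with hWsymdef
  have htrans_quad : ∀ (X : Matrix (Fin d) (Fin d) ℝ) (y : Fin d → ℝ),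
      y ⬝ᵥ (Xᵀ *ᵥ y) = y ⬝ᵥ (X *ᵥ y) := by
    intro X y
    rw [Matrix.dotProduct_mulVec, Matrix.vecMul_transpose, dotProduct_comm]
  have hstar_vec : ∀ y : Fin d → ℝ, star y = y := fun y => funext fun i => star_trivial _
  have hherm_of_symm : ∀ X : Matrix (Fin d) (Fin d) ℝ, Xᵀ = X → X.IsHermitian := by
    intro X h
    have : Xᴴ = Xᵀ := by
      ext i j
      rw [Matrix.conjTranspose_apply, Matrix.transpose_apply, star_trivial]
    rw [Matrix.IsHermitian, this, h]
  have hWsymquad : ∀ y : Fin d → ℝ, y ⬝ᵥ (Wsym *ᵥ y) = y ⬝ᵥ (W1 *ᵥ y) := by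
    intro y
    rw [hWsymdef, Matrix.smul_mulVec, Matrix.add_mulVec, dotProduct_smul,
      dotProduct_add, htrans_quad]
    simp only [smul_eq_mul]
    ring
  have hWsymPD : Wsym.PosDef := by
    refine Matrix.PosDef.of_dotProduct_mulVec_pos (hherm_of_symm _ ?_) fun y hy => ?_
    · rw [hWsymdef, Matrix.transpose_smul, Matrix.transpose_add, Matrix.transpose_transpose,
        add_comm]
    · rw [hstar_vec y, hWsymquad]
      exact hW1quad y hy
  have hWsymMc : ∀ c, star c = c → Wsym * Mc c = (1/2 : ℝ) • (Grm c + (Grm c)ᵀ) := by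
    intro c hc
    rw [hWsymdef, Matrix.smul_mul, Matrix.add_mul, ← hGrm_mul c, hGrm_tmul c hc]
  have hWsymMcPD : ∀ c, star c = c →
      (∀ y : Fin d → ℝ, y ≠ 0 → 0 < y ⬝ᵥ (Grm c *ᵥ y)) → (Wsym * Mc c).PosDef := by
    intro c hc hq
    refine Matrix.PosDef.of_dotProduct_mulVec_pos (hherm_of_symm _ ?_) fun y hy => ?_
    · rw [hWsymMc c hc, Matrix.transpose_smul, Matrix.transpose_add,
        Matrix.transpose_transpose, add_comm]
    · rw [hstar_vec y, hWsymMc c hc, Matrix.smul_mulVec, Matrix.add_mulVec,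
        dotProduct_smul, dotProduct_add, htrans_quad]
      have h3 := hq y hy
      simp only [smul_eq_mul]
      linarith
  have hGrmA_quad : ∀ y : Fin d → ℝ, y ≠ 0 → 0 < y ⬝ᵥ (Grm a *ᵥ y) := by
    intro y hy
    rw [hquad]
    exact hapos _ (hsum_ne y hy)
  set ca : ℝ ⊗[ℚ] A := star ξ * a * ξ with hcadef
  have hca_star : star ca = ca := by
    rw [hcadef]
    simp only [star_mul, ha, star_star, mul_assoc]
  have hxi_ne : ∀ s : ℝ ⊗[ℚ] A, s ≠ 0 → ξ * s ≠ 0 := by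
    intro s hs h0
    have hinv : ((1:ℝ) ⊗ₜ[ℚ] (x⁻¹ : A)) * ξ = 1 := by
      rw [hxidef, Algebra.TensorProduct.tmul_mul_tmul, one_mul, inv_mul_cancel₀ hx0,
        Algebra.TensorProduct.one_def]
    apply hs
    calc s = (((1:ℝ) ⊗ₜ[ℚ] (x⁻¹ : A)) * ξ) * s := by rw [hinv, one_mul]
    _ = ((1:ℝ) ⊗ₜ[ℚ] (x⁻¹:A)) * (ξ * s) := mul_assoc _ _ _
    _ = 0 := by rw [h0, mul_zero]
  have hGrmca_quad : ∀ y : Fin d → ℝ, y ≠ 0 → 0 < y ⬝ᵥ (Grm ca *ᵥ y) := by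
    intro y hy
    rw [hquad]
    have h1 : star (∑ i, y i • eO i) * ca * (∑ j, y j • eO j)
        = star (ξ * ∑ i, y i • eO i) * a * (ξ * ∑ j, y j • eO j) := by
      rw [hcadef, star_mul ξ]
      simp only [mul_assoc]
    rw [h1]
    exact hapos _ (hxi_ne _ (hsum_ne y hy))
  have hPDa := hWsymMcPD a ha hGrmA_quad
  have hPDca := hWsymMcPD ca hca_star hGrmca_quad
  obtain ⟨hdetMa_pos, -⟩ := key_amgm Wsym (Mc a) hWsymPD hPDa
  obtain ⟨hdetMca_pos, htrMca⟩ := key_amgm Wsym (Mc ca) hWsymPD hPDca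
  -- trace identification
  have htrace_eq : (Mc ca).trace
      = LinearMap.trace ℝ (ℝ ⊗[ℚ] A) (LinearMap.mulLeft ℝ ca) := by
    simp only [hMcdef]
    exact (LinearMap.trace_eq_matrix_trace ℝ eO _).symm
  -- multiplicativity of Mc
  have hMc_mul : ∀ u v : ℝ ⊗[ℚ] A, Mc (u * v) = Mc u * Mc v := by
    intro u v
    simp only [hMcdef]
    rw [LinearMap.mulLeft_mul, LinearMap.toMatrix_comp eO eO eO]
  have hdet_ca : (Mc ca).det = (Mc (star ξ)).det * (Mc a).det * (Mc ξ).det := by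
    rw [hcadef, hMc_mul, hMc_mul, Matrix.det_mul, Matrix.det_mul]
  -- star conjugation: det (mulLeft (star ξ)) = det (mulRight ξ)
  have hdet_star : LinearMap.det (LinearMap.mulLeft ℝ (star ξ))
      = LinearMap.det (LinearMap.mulRight ℝ ξ) := by
    set starE : (ℝ ⊗[ℚ] A) ≃ₗ[ℝ] (ℝ ⊗[ℚ] A) :=
      { toFun := star, invFun := star,
        map_add' := star_add,
        map_smul' := fun r y => by simp [star_smul],
        left_inv := star_star, right_inv := star_star } with hstarEdef
    have hconj : LinearMap.mulLeft ℝ (star ξ)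
        = (starE : (ℝ ⊗[ℚ] A) →ₗ[ℝ] (ℝ ⊗[ℚ] A)) ∘ₗ (LinearMap.mulRight ℝ ξ)
            ∘ₗ (starE.symm : (ℝ ⊗[ℚ] A) →ₗ[ℝ] (ℝ ⊗[ℚ] A)) := by
      apply LinearMap.ext
      intro y
      show star ξ * y = star (star y * ξ)
      rw [star_mul, star_star]
    rw [hconj, LinearMap.det_conj]
  -- base change identities
  have hbcL : LinearMap.mulLeft ℝ ξ = (LinearMap.mulLeft ℚ x).baseChange ℝ := by
    apply LinearMap.ext
    intro y
    induction y using TensorProduct.induction_on with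
    | zero => simp
    | tmul r m =>
      simp only [LinearMap.mulLeft_apply, LinearMap.baseChange_tmul, hxidef,
        Algebra.TensorProduct.tmul_mul_tmul, one_mul]
    | add u v hu hv => simp only [map_add, mul_add, LinearMap.mulLeft_apply] at hu hv ⊢; rw [hu, hv]
  have hbcR : LinearMap.mulRight ℝ ξ = (LinearMap.mulRight ℚ x).baseChange ℝ := by
    apply LinearMap.ext
    intro y
    induction y using TensorProduct.induction_on with
    | zero => simp
    | tmul r m =>
      simp only [LinearMap.mulRight_apply, LinearMap.baseChange_tmul, hxidef,
        Algebra.TensorProduct.tmul_mul_tmul, mul_one]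
    | add u v hu hv => simp only [map_add, add_mul, LinearMap.mulRight_apply] at hu hv ⊢; rw [hu, hv]
  have hdetMcξ : (Mc ξ).det = ((LinearMap.det (LinearMap.mulLeft ℚ x) : ℚ) : ℝ) := by
    simp only [hMcdef]
    rw [LinearMap.det_toMatrix, hbcL, LinearMap.det_baseChange]
    exact eq_ratCast ((algebraMap ℚ ℝ) : ℚ →+* ℝ) _
  have hdetMcξs : (Mc (star ξ)).det = ((LinearMap.det (LinearMap.mulRight ℚ x) : ℚ) : ℝ) := by
    simp only [hMcdef]
    rw [LinearMap.det_toMatrix, hdet_star, hbcR, LinearMap.det_baseChange]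
    exact eq_ratCast ((algebraMap ℚ ℝ) : ℚ →+* ℝ) _
  -- rational factorization
  set Qm : Matrix (Fin d) (Fin d) ℚ := Matrix.of fun i k => bQO.repr (bI k) i with hQmdef
  have hxbO_mem : ∀ j, x * bO j ∈ Submodule.span ℤ (Set.range bI) := by
    intro j
    rw [hbIspan]
    exact (hI (bO j) ((hbOspan (bO j)).mpr (Submodule.subset_span ⟨j, rfl⟩)) x hxI).2
  have hbOx_mem : ∀ j, bO j * x ∈ Submodule.span ℤ (Set.range bI) := by
    intro j
    rw [hbIspan]
    exact (hI (bO j) ((hbOspan (bO j)).mpr (Submodule.subset_span ⟨j, rfl⟩)) x hxI).1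
  choose cL hcL using fun j => (Submodule.mem_span_range_iff_exists_fun ℤ).mp (hxbO_mem j)
  choose cR hcR using fun j => (Submodule.mem_span_range_iff_exists_fun ℤ).mp (hbOx_mem j)
  have hreprInt : ∀ (c : Fin d → ℤ) (k : Fin d),
      bQI.repr (∑ k', c k' • bI k') k = ((c k : ℤ) : ℚ) := by
    intro c k
    have h1 : (∑ k', c k' • bI k') = ∑ k', c k' • bQI k' := by rw [hbQI]
    rw [h1, map_sum]
    have h2 : ∀ k', bQI.repr (c k' • bQI k') = (c k' : ℚ) • bQI.repr (bQI k') := by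
      intro k'
      rw [← Int.cast_smul_eq_zsmul ℚ, map_smul]
    simp only [h2, Module.Basis.repr_self]
    simp [Finsupp.single_apply, Finset.sum_apply']
  set NL : Matrix (Fin d) (Fin d) ℚ := Matrix.of fun k j => bQI.repr (x * bO j) k with hNLdef
  set NR : Matrix (Fin d) (Fin d) ℚ := Matrix.of fun k j => bQI.repr (bO j * x) k with hNRdef
  obtain ⟨nL, hnL⟩ : ∃ n : ℤ, NL.det = (n : ℚ) := by
    refine ⟨(Matrix.of fun k j : Fin d => cL j k).det, ?_⟩
    have h1 : NL = (Matrix.of fun k j : Fin d => cL j k).map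
        ((Int.castRingHom ℚ) : ℤ → ℚ) := by
      ext k j
      simp only [hNLdef, Matrix.map_apply, Matrix.of_apply]
      rw [← hcL j, hreprInt]
      rfl
    rw [h1]
    have h2 := RingHom.map_det (Int.castRingHom ℚ) (Matrix.of fun k j : Fin d => cL j k)
    rw [RingHom.mapMatrix_apply] at h2
    rw [← h2]
    rfl
  obtain ⟨nR, hnR⟩ : ∃ n : ℤ, NR.det = (n : ℚ) := by
    refine ⟨(Matrix.of fun k j : Fin d => cR j k).det, ?_⟩
    have h1 : NR = (Matrix.of fun k j : Fin d => cR j k).map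
        ((Int.castRingHom ℚ) : ℤ → ℚ) := by
      ext k j
      simp only [hNRdef, Matrix.map_apply, Matrix.of_apply]
      rw [← hcR j, hreprInt]
      rfl
    rw [h1]
    have h2 := RingHom.map_det (Int.castRingHom ℚ) (Matrix.of fun k j : Fin d => cR j k)
    rw [RingHom.mapMatrix_apply] at h2
    rw [← h2]
    rfl
  have hLfact : LinearMap.det (LinearMap.mulLeft ℚ x) = Qm.det * NL.det := by
    rw [← LinearMap.det_toMatrix bQO]
    have h1 : LinearMap.toMatrix bQO bQO (LinearMap.mulLeft ℚ x) = Qm * NL := by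
      ext i j
      rw [LinearMap.toMatrix_apply, LinearMap.mulLeft_apply, Matrix.mul_apply]
      have hxj : x * bQO j = ∑ k, NL k j • bQI k := by
        simp only [hNLdef, Matrix.of_apply, hbQO]
        exact (bQI.sum_repr (x * bO j)).symm
      rw [hxj, map_sum]
      simp only [map_smul, Finset.sum_apply', Finsupp.smul_apply, smul_eq_mul,
        hQmdef, hNLdef, Matrix.of_apply, hbQI]
      exact Finset.sum_congr rfl fun k _ => by ring
    rw [h1, Matrix.det_mul]
  have hRfact : LinearMap.det (LinearMap.mulRight ℚ x) = Qm.det * NR.det := by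
    rw [← LinearMap.det_toMatrix bQO]
    have h1 : LinearMap.toMatrix bQO bQO (LinearMap.mulRight ℚ x) = Qm * NR := by
      ext i j
      rw [LinearMap.toMatrix_apply, LinearMap.mulRight_apply, Matrix.mul_apply]
      have hxj : bQO j * x = ∑ k, NR k j • bQI k := by
        simp only [hNRdef, Matrix.of_apply, hbQO]
        exact (bQI.sum_repr (bO j * x)).symm
      rw [hxj, map_sum]
      simp only [map_smul, Finset.sum_apply', Finsupp.smul_apply, smul_eq_mul,
        hQmdef, hNRdef, Matrix.of_apply, hbQI]
      exact Finset.sum_congr rfl fun k _ => by ring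
    rw [h1, Matrix.det_mul]
  -- Gram change of basis for GI
  set Pr : Matrix (Fin d) (Fin d) ℝ := Matrix.of (fun i j => ((Qm j i : ℚ) : ℝ)) with hPrdef
  have heI_expand : ∀ i : Fin d, (1:ℝ) ⊗ₜ[ℚ] bI i = ∑ j, Pr i j • eO j := by
    intro i
    have h0 : bI i = ∑ j, bQO.repr (bI i) j • bQO j := (bQO.sum_repr (bI i)).symm
    conv_lhs => rw [h0]
    rw [TensorProduct.tmul_sum]
    refine Finset.sum_congr rfl fun j _ => ?_
    rw [TensorProduct.tmul_smul]
    have h1 : (1:ℝ) ⊗ₜ[ℚ] (bQO j) = eO j := by rw [heO j, hbQO]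
    rw [h1]
    have h2 : Pr i j = algebraMap ℚ ℝ (bQO.repr (bI i) j) := by
      simp only [hPrdef, hQmdef, Matrix.of_apply]
      exact (eq_ratCast _ _).symm
    rw [h2, algebraMap_smul]
  have hGIfact : GI = Pr * Grm a * Prᵀ := by
    ext i j
    have hL : GI i j = T (star ((1:ℝ) ⊗ₜ[ℚ] bI i) * a * ((1:ℝ) ⊗ₜ[ℚ] bI j)) := by
      simp only [hGIdef, Matrix.of_apply, hT]
    rw [hL, heI_expand i, heI_expand j, hexp]
    simp only [Matrix.mul_apply, Matrix.transpose_apply, hGrmdef, Matrix.of_apply,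
      Finset.sum_mul]
    rw [Finset.sum_comm]
    exact Finset.sum_congr rfl fun k _ => Finset.sum_congr rfl fun l _ => by ring
  have hPrdet : Pr.det = ((Qm.det : ℚ) : ℝ) := by
    have h1 : Pr = ((Rat.castHom ℝ).mapMatrix Qm)ᵀ := by
      ext i j
      simp [hPrdef, RingHom.mapMatrix_apply, Matrix.map_apply, Matrix.transpose_apply]
    rw [h1, Matrix.det_transpose, ← RingHom.map_det]
    exact eq_ratCast _ _
  -- numeric values
  set p : ℝ := ((Qm.det : ℚ) : ℝ) with hpdef
  set na : ℝ := (Mc a).det with hnadef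
  have hna_pos : 0 < na := hdetMa_pos
  have hdetGrmA : (Grm a).det = W1.det * na := by rw [hGrm_mul a, Matrix.det_mul, hnadef]
  have hdetGI : GI.det = (p^2 * na) * W1.det := by
    rw [hGIfact, Matrix.det_mul, Matrix.det_mul, Matrix.det_transpose, hdetGrmA, hPrdet]
    ring
  have hdetMca_val : (Mc ca).det = p^2 * ((nL * nR : ℤ) : ℝ) * na := by
    rw [hdet_ca, hdetMcξ, hdetMcξs, hLfact, hRfact, hnL, hnR, hpdef]
    push_cast
    ring

  have hz_pos : (0:ℝ) < ((nL * nR : ℤ) : ℝ) := by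
    by_contra hle
    push_neg at hle
    have hneg : (Mc ca).det ≤ 0 := by
      rw [hdetMca_val]
      nlinarith [mul_nonneg (sq_nonneg p) hna_pos.le]
    linarith [hdetMca_pos]
  have hz1 : (1:ℝ) ≤ ((nL * nR : ℤ) : ℝ) := by
    have h1 : (0:ℤ) < nL * nR := by exact_mod_cast hz_pos
    exact_mod_cast h1
  have hp2_pos : 0 < p^2 := by
    have h := hdetMca_pos
    rw [hdetMca_val] at h
    have h2 := mul_pos hz_pos hna_pos
    nlinarith [sq_nonneg p]
  have hpn_pos : 0 < p^2 * na := mul_pos hp2_pos hna_pos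
  have hdca_ge : p^2 * na ≤ (Mc ca).det := by
    rw [hdetMca_val]
    nlinarith [hp2_pos, hna_pos, hz1]
  have hrpow_le : (p^2*na) ^ (1/(d:ℝ)) ≤ ((Mc ca).det) ^ (1/(d:ℝ)) :=
    Real.rpow_le_rpow hpn_pos.le hdca_ge (by positivity)
  have hq_ge : (d:ℝ) * (p^2*na) ^ (1/(d:ℝ)) ≤ (Mc ca).trace := by
    calc (d:ℝ) * (p^2*na) ^ (1/(d:ℝ)) ≤ (d:ℝ) * ((Mc ca).det) ^ (1/(d:ℝ)) :=
          mul_le_mul_of_nonneg_left hrpow_le (by positivity)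
      _ ≤ (Mc ca).trace := htrMca
  have hGIdet_pos : 0 < GI.det := by
    rw [hdetGI]
    exact mul_pos hpn_pos hW1det
  have hWd_pos : 0 < W1.det ^ (1/(d:ℝ)) := Real.rpow_pos_of_pos hW1det _
  have hGId_pos : 0 < GI.det ^ (1/(d:ℝ)) := Real.rpow_pos_of_pos hGIdet_pos _
  rw [ge_iff_le, div_le_div_iff₀ hWd_pos hGId_pos]
  rw [hdetGI, Real.mul_rpow hpn_pos.le hW1det.le]
  have hfin : (d:ℝ) * ((p^2*na)^(1/(d:ℝ)) * W1.det^(1/(d:ℝ)))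
      ≤ ((Mc ca).trace) * W1.det^(1/(d:ℝ)) := by
    rw [← mul_assoc]
    exact mul_le_mul_of_nonneg_right hq_ge hWd_pos.le
  rw [htrace_eq] at hfin
  exact hfin
end
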